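/- Graph-norm variant of closeness (as used for Neumann obstacles): let e in H and ẽ in H̃ be energy forms with associated operators Δ and Δ̃, and let J, J', J¹, J'¹ satisfy conditions (a), (b), (c) of δ-quasi-unitary equivalence together with the graph-norm closeness condition |ẽ(J¹f, u) − e(f, J'¹u)| ≤ δ ‖(Δ+1)f‖_H ‖u‖_ẽ for all f ∈ dom Δ and u ∈ H̃¹. Then ‖(Δ̃+1)⁻¹J − J(Δ+1)⁻¹‖ ≤ 4δ, and the operators Δ and Δ̃ are 4δ-operator-quasi-unitarily equivalent with identification operators J and J'. -/

import Mathlib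

open scoped ComplexConjugate

noncomputable section

/-- A non-negative self-adjoint operator in a complex Hilbert space `H`, packaged as a
densely defined symmetric non-negative operator together with its (everywhere defined,
bounded) resolvent `res = (Δ + 1)⁻¹`. -/
structure NonnegOp (H : Type*) [NormedAddCommGroup H] [InnerProductSpace ℂ H]
    [CompleteSpace H] where
  domain : Submodule ℂ H
  dense : Dense (domain : Set H)
  op : domain →ₗ[ℂ] H
  symm : ∀ f g : domain, (inner ℂ (op f) (g : H) : ℂ) = inner ℂ (f : H) (op g)
  nonneg : ∀ f : domain, 0 ≤ (inner ℂ (op f) (f : H) : ℂ).re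
  res : H →L[ℂ] H
  res_mem : ∀ u : H, res u ∈ domain
  op_res : ∀ u : H, op ⟨res u, res_mem u⟩ + res u = u
  res_op : ∀ f : domain, res (op f + (f : H)) = f

/-- `Rz` is the resolvent `(Δ - z)⁻¹` of the operator `T` at the point `z`. -/
structure IsResolventAt {H : Type*} [NormedAddCommGroup H] [InnerProductSpace ℂ H]
    [CompleteSpace H] (T : NonnegOp H) (z : ℂ) (Rz : H →L[ℂ] H) : Prop where
  mem : ∀ u : H, Rz u ∈ T.domain
  right_inv : ∀ u : H, T.op ⟨Rz u, mem u⟩ - z • Rz u = u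
  left_inv : ∀ f : T.domain, Rz (T.op f - z • (f : H)) = f

/-- The spectrum of `T`: the set of `z : ℂ` at which no bounded resolvent exists. -/
def NonnegOp.spec {H : Type*} [NormedAddCommGroup H] [InnerProductSpace ℂ H]
    [CompleteSpace H] (T : NonnegOp H) : Set ℂ :=
  {z | ¬ ∃ Rz : H →L[ℂ] H, IsResolventAt T z Rz}


/-- An energy form in `H` with form domain `D`: a densely defined, closed, non-negative,
hermitian sesquilinear form (conjugate-linear in the first argument). -/
structure EnergyFormOn (H : Type*) [NormedAddCommGroup H] [InnerProductSpace ℂ H]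
    [CompleteSpace H] (D : Submodule ℂ H) where
  dense : Dense (D : Set H)
  form : D → D → ℂ
  linear_right : ∀ f : D, IsLinearMap ℂ (form f)
  conj_symm : ∀ f g : D, form g f = conj (form f g)
  nonneg : ∀ f : D, 0 ≤ (form f f).re
  closed : ∀ f : ℕ → D,
    (∀ ε : ℝ, 0 < ε → ∃ N : ℕ, ∀ p ≥ N, ∀ q ≥ N,
        ‖((f p : H)) - (f q : H)‖ ^ 2 + (form (f p - f q) (f p - f q)).re < ε) →
    ∃ g : D, Filter.Tendsto
        (fun n => ‖((f n : H)) - (g : H)‖ ^ 2 + (form (f n - g) (f n - g)).re)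
        Filter.atTop (nhds 0)

/-- The form norm `‖f‖_e = (‖f‖² + e(f,f))^{1/2}`. -/
def EnergyFormOn.enorm {H : Type*} [NormedAddCommGroup H] [InnerProductSpace ℂ H]
    [CompleteSpace H] {D : Submodule ℂ H} (E : EnergyFormOn H D) (f : D) : ℝ :=
  Real.sqrt (‖(f : H)‖ ^ 2 + (E.form f f).re)

/-- `T` is the non-negative self-adjoint operator associated with the energy form `E`
(first representation theorem). -/
structure IsAssociatedOp {H : Type*} [NormedAddCommGroup H] [InnerProductSpace ℂ H]
    [CompleteSpace H] {D : Submodule ℂ H} (E : EnergyFormOn H D) (T : NonnegOp H) : Prop where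
  le : T.domain ≤ D
  compat : ∀ (f : T.domain) (u : D),
    E.form ⟨(f : H), le f.2⟩ u = (inner ℂ (T.op f) (u : H) : ℂ)


/-- `δ`-quasi-unitary equivalence of the energy forms `E` and `E'` with identification
operators `J`, `J'` (on the Hilbert spaces) and `J1`, `J1'` (on the form domains). -/
structure FormQUE {H H' : Type*} [NormedAddCommGroup H] [InnerProductSpace ℂ H]
    [CompleteSpace H] [NormedAddCommGroup H'] [InnerProductSpace ℂ H'] [CompleteSpace H']
    {D : Submodule ℂ H} {D' : Submodule ℂ H'}
    (E : EnergyFormOn H D) (E' : EnergyFormOn H' D') (δ : ℝ)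
    (J : H →L[ℂ] H') (J' : H' →L[ℂ] H)
    (J1 : D →ₗ[ℂ] D') (J1' : D' →ₗ[ℂ] D) : Prop where
  bounded : ∀ f : H, ‖J f‖ ≤ (1 + δ) * ‖f‖
  almost_adjoint : ∀ (f : H) (u : H'),
    ‖(inner ℂ (J f) u : ℂ) - (inner ℂ f (J' u) : ℂ)‖ ≤ δ * ‖f‖ * ‖u‖
  inv_left : ∀ f : D, ‖(f : H) - J' (J (f : H))‖ ≤ δ * E.enorm f
  inv_right : ∀ u : D', ‖(u : H') - J (J' (u : H'))‖ ≤ δ * E'.enorm u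
  compat_left : ∀ f : D, ‖((J1 f : H')) - J (f : H)‖ ≤ δ * E.enorm f
  compat_right : ∀ u : D', ‖((J1' u : H)) - J' (u : H')‖ ≤ δ * E'.enorm u
  close : ∀ (f : D) (u : D'),
    ‖E'.form (J1 f) u - E.form f (J1' u)‖ ≤ δ * E.enorm f * E'.enorm u


/-- `δ`-operator-quasi-unitary equivalence of `T` and `T'` with identification
operators `J` and `J'`. -/
structure OpQUE {H H' : Type*} [NormedAddCommGroup H] [InnerProductSpace ℂ H]
    [CompleteSpace H] [NormedAddCommGroup H'] [InnerProductSpace ℂ H'] [CompleteSpace H']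
    (T : NonnegOp H) (T' : NonnegOp H') (δ : ℝ)
    (J : H →L[ℂ] H') (J' : H' →L[ℂ] H) : Prop where
  norm_J : ‖J‖ ≤ 1 + δ
  adjoint_close : ‖ContinuousLinearMap.adjoint J - J'‖ ≤ δ
  inv_left : ‖(ContinuousLinearMap.id ℂ H - J'.comp J).comp T.res‖ ≤ δ
  inv_right : ‖(ContinuousLinearMap.id ℂ H' - J.comp J').comp T'.res‖ ≤ δ
  intertwine : ‖T'.res.comp J - J.comp T.res‖ ≤ δ


section Helpers
variable {H H' : Type*} [NormedAddCommGroup H] [InnerProductSpace ℂ H] [CompleteSpace H]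
  [NormedAddCommGroup H'] [InnerProductSpace ℂ H'] [CompleteSpace H']

lemma EnergyFormOn.enorm_nonneg {D : Submodule ℂ H} (E : EnergyFormOn H D) (f : D) :
    0 ≤ E.enorm f := Real.sqrt_nonneg _

omit [CompleteSpace H] [CompleteSpace H'] in
lemma mul3_le {d a b A B : ℝ} (hd : 0 ≤ d) (ha : a ≤ A) (hb : b ≤ B)
    (ha0 : 0 ≤ a) (hb0 : 0 ≤ b) : d * a * b ≤ d * A * B := by
  have hA : 0 ≤ A := le_trans ha0 ha
  calc d * a * b ≤ d * A * b := by
        apply mul_le_mul_of_nonneg_right _ hb0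
        exact mul_le_mul_of_nonneg_left ha hd
    _ ≤ d * A * B := mul_le_mul_of_nonneg_left hb (by positivity)

/-- A vector whose inner ℂ products are all small is small. -/
lemma norm_le_of_inner {v : H} {C : ℝ} (hC : 0 ≤ C)
    (h : ∀ x : H, ‖(inner ℂ v x : ℂ)‖ ≤ C * ‖x‖) : ‖v‖ ≤ C := by
  have h1 := h v
  have he : (inner ℂ v v : ℂ) = ((‖v‖ : ℂ)) ^ 2 := inner_self_eq_norm_sq_to_K v
  rw [he] at h1
  simp only [norm_pow, Complex.norm_real, norm_norm] at h1
  rcases eq_or_lt_of_le (norm_nonneg v) with h0 | h0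
  · rw [← h0]; exact hC
  · nlinarith

/-- Operator-norm bound from a sesquilinear bound. -/
lemma opNorm_le_of_inner {A : H →L[ℂ] H'} {C : ℝ} (hC : 0 ≤ C)
    (h : ∀ f w, ‖(inner ℂ (A f) w : ℂ)‖ ≤ C * ‖f‖ * ‖w‖) : ‖A‖ ≤ C := by
  apply ContinuousLinearMap.opNorm_le_bound _ hC
  intro f
  rcases le_or_gt ‖f‖ 0 with h0 | h0
  · have : f = 0 := norm_le_zero_iff.mp h0
    simp [this]
  · apply norm_le_of_inner (by positivity)
    intro x
    calc ‖(inner ℂ (A f) x : ℂ)‖ ≤ C * ‖f‖ * ‖x‖ := h f x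
      _ = C * ‖f‖ * ‖x‖ := rfl

lemma NonnegOp.sq_norm_res_le' (T : NonnegOp H) (f : H) :
    ‖T.res f‖ ^ 2 ≤ (inner ℂ f (T.res f) : ℂ).re := by
  have h := T.nonneg ⟨T.res f, T.res_mem f⟩
  have h2 := T.op_res f
  have heq : (inner ℂ f (T.res f) : ℂ)
      = inner ℂ (T.op ⟨T.res f, T.res_mem f⟩) (T.res f) + inner ℂ (T.res f) (T.res f) := by
    rw [← inner_add_left, h2]
  rw [heq]
  have h3 : ((inner ℂ (T.res f) (T.res f) : ℂ)).re = ‖T.res f‖ ^ 2 := by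
    have := @inner_self_eq_norm_sq ℂ H _ _ _ (T.res f)
    simpa using this
  simp only [Complex.add_re]
  rw [h3]
  linarith [h]

lemma NonnegOp.norm_res_le' (T : NonnegOp H) (f : H) : ‖T.res f‖ ≤ ‖f‖ := by
  have h1 := T.sq_norm_res_le' f
  have h2 : (inner ℂ f (T.res f) : ℂ).re ≤ ‖f‖ * ‖T.res f‖ := by
    refine le_trans (Complex.re_le_norm _) ?_
    exact norm_inner_le_norm f (T.res f)
  nlinarith [norm_nonneg (T.res f), norm_nonneg f]

lemma NonnegOp.norm_sub_res_le' (T : NonnegOp H) (f : H) : ‖f - T.res f‖ ≤ ‖f‖ := by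
  have h1 := T.sq_norm_res_le' f
  have h2 : ‖f - T.res f‖^2 = ‖f‖^2 - 2*(inner ℂ f (T.res f) : ℂ).re + ‖T.res f‖^2 := by
    have := @norm_sub_sq ℂ H _ _ _ f (T.res f)
    simpa using this
  nlinarith [norm_nonneg (f - T.res f), norm_nonneg f]

lemma NonnegOp.res_symm' (T : NonnegOp H) (x y : H) :
    (inner ℂ (T.res x) y : ℂ) = inner ℂ x (T.res y) := by
  have hx := T.op_res x
  have hy := T.op_res y
  calc (inner ℂ (T.res x) y : ℂ)
      = inner ℂ (T.res x) (T.op ⟨T.res y, T.res_mem y⟩ + T.res y) := by rw [hy]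
    _ = inner ℂ (T.res x) (T.op ⟨T.res y, T.res_mem y⟩) + inner ℂ (T.res x) (T.res y) := by
        rw [inner_add_right]
    _ = inner ℂ (T.op ⟨T.res x, T.res_mem x⟩) (T.res y) + inner ℂ (T.res x) (T.res y) := by
        rw [T.symm ⟨T.res x, T.res_mem x⟩ ⟨T.res y, T.res_mem y⟩]
    _ = inner ℂ (T.op ⟨T.res x, T.res_mem x⟩ + T.res x) (T.res y) := by rw [inner_add_left]
    _ = inner ℂ x (T.res y) := by rw [hx]

/-- The form norm of `(Δ+1)⁻¹ f` is at most `‖f‖`. -/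
lemma enorm_res_le {D : Submodule ℂ H} (E : EnergyFormOn H D) (T : NonnegOp H)
    (hT : IsAssociatedOp E T) (f : H) :
    E.enorm ⟨T.res f, hT.le (T.res_mem f)⟩ ≤ ‖f‖ := by
  have hcompat := hT.compat ⟨T.res f, T.res_mem f⟩ ⟨T.res f, hT.le (T.res_mem f)⟩
  have key : ‖T.res f‖^2
        + (E.form ⟨T.res f, hT.le (T.res_mem f)⟩ ⟨T.res f, hT.le (T.res_mem f)⟩).re
      = (inner ℂ f (T.res f) : ℂ).re := by
    rw [hcompat]
    have h2 := T.op_res f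
    have heq : (inner ℂ f (T.res f) : ℂ)
        = inner ℂ (T.op ⟨T.res f, T.res_mem f⟩) (T.res f) + inner ℂ (T.res f) (T.res f) := by
      rw [← inner_add_left, h2]
    rw [heq]
    have h3 : ((inner ℂ (T.res f) (T.res f) : ℂ)).re = ‖T.res f‖ ^ 2 := by
      have := @inner_self_eq_norm_sq ℂ H _ _ _ (T.res f)
      simpa using this
    simp only [Complex.add_re, h3]
    ring
  have hb : (inner ℂ f (T.res f) : ℂ).re ≤ ‖f‖^2 := by
    have h2 : (inner ℂ f (T.res f) : ℂ).re ≤ ‖f‖ * ‖T.res f‖ := by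
      refine le_trans (Complex.re_le_norm _) ?_
      exact norm_inner_le_norm f (T.res f)
    have := T.norm_res_le' f
    nlinarith [norm_nonneg f]
  show Real.sqrt _ ≤ ‖f‖
  rw [show ‖((⟨T.res f, hT.le (T.res_mem f)⟩ : D) : H)‖ = ‖T.res f‖ from rfl]
  calc Real.sqrt (‖T.res f‖^2 + _) ≤ Real.sqrt (‖f‖^2) := by
        apply Real.sqrt_le_sqrt
        rw [key]; exact hb
    _ = ‖f‖ := Real.sqrt_sq (norm_nonneg f)

/-- Package of facts about `g = (Δ+1)⁻¹ f`. -/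
lemma res_package {D : Submodule ℂ H} (E : EnergyFormOn H D) (T : NonnegOp H)
    (hT : IsAssociatedOp E T) (f : H) :
    ∃ (g : H) (hm : g ∈ T.domain), T.res f = g ∧ T.op ⟨g, hm⟩ + g = f ∧
      ‖g‖ ≤ ‖f‖ ∧ ‖f - g‖ ≤ ‖f‖ ∧ E.enorm ⟨g, hT.le hm⟩ ≤ ‖f‖ :=
  ⟨T.res f, T.res_mem f, rfl, T.op_res f, T.norm_res_le' f, T.norm_sub_res_le' f,
    enorm_res_le E T hT f⟩

end Helpers

/-- **Statement 19** (Graph-norm variant of closeness, as used for Neumann obstacles,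
cf. [Anné–Post, Thm. 4.3]).  Let `E`, `E'` be energy forms with associated operators
`Δ = T`, `Δ̃ = T'`, and let `J`, `J'`, `J¹ = J1`, `J'¹ = J1'` satisfy conditions (a),
(b), (c) of `δ`-quasi-unitary equivalence together with the graph-norm closeness
condition `|ẽ(J¹f, u) − e(f, J'¹u)| ≤ δ ‖(Δ+1)f‖ ‖u‖_ẽ` for all `f ∈ dom Δ`,
`u ∈ H̃¹`.  Then `‖(Δ̃+1)⁻¹J − J(Δ+1)⁻¹‖ ≤ 4δ` and the operators `Δ`, `Δ̃` are
`4δ`-operator-quasi-unitarily equivalent with identification operators `J`, `J'`. -/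
theorem graph_norm_closeness_opQUE
    {H H' : Type*}
    [NormedAddCommGroup H] [InnerProductSpace ℂ H] [CompleteSpace H]
    [NormedAddCommGroup H'] [InnerProductSpace ℂ H'] [CompleteSpace H']
    {D : Submodule ℂ H} {D' : Submodule ℂ H'}
    (E : EnergyFormOn H D) (E' : EnergyFormOn H' D')
    (T : NonnegOp H) (T' : NonnegOp H')
    (hT : IsAssociatedOp E T) (hT' : IsAssociatedOp E' T')
    (δ : ℝ) (hδ : 0 ≤ δ)
    (J : H →L[ℂ] H') (J' : H' →L[ℂ] H) (J1 : D →ₗ[ℂ] D') (J1' : D' →ₗ[ℂ] D)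
    (ha1 : ∀ f : H, ‖J f‖ ≤ (1 + δ) * ‖f‖)
    (ha2 : ∀ (f : H) (u : H'),
      ‖(inner ℂ (J f) u : ℂ) - (inner ℂ f (J' u) : ℂ)‖ ≤ δ * ‖f‖ * ‖u‖)
    (hb1 : ∀ f : D, ‖(f : H) - J' (J (f : H))‖ ≤ δ * E.enorm f)
    (hb2 : ∀ u : D', ‖(u : H') - J (J' (u : H'))‖ ≤ δ * E'.enorm u)
    (hc1 : ∀ f : D, ‖((J1 f : H')) - J (f : H)‖ ≤ δ * E.enorm f)
    (hc2 : ∀ u : D', ‖((J1' u : H)) - J' (u : H')‖ ≤ δ * E'.enorm u)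
    (hd' : ∀ (f : T.domain) (u : D'),
      ‖E'.form (J1 ⟨(f : H), hT.le f.2⟩) u
          - E.form ⟨(f : H), hT.le f.2⟩ (J1' u)‖
        ≤ δ * ‖T.op f + (f : H)‖ * E'.enorm u) :
    ‖T'.res.comp J - J.comp T.res‖ ≤ 4 * δ ∧ OpQUE T T' (4 * δ) J J' := by
  have h4δ : (0:ℝ) ≤ 4 * δ := by linarith
  -- main intertwining estimate
  have hinter : ‖T'.res.comp J - J.comp T.res‖ ≤ 4 * δ := by
    apply opNorm_le_of_inner h4δ
    intro f w
    obtain ⟨g, hgm, hgres, hgf, hgn, hgsn, hge⟩ := res_package E T hT f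
    obtain ⟨u, hum, hures, huw, hun, husn, hue⟩ := res_package E' T' hT' w
    -- the applied operator
    have hApp : (inner ℂ ((T'.res.comp J - J.comp T.res) f) w : ℂ)
        = (inner ℂ (J f) u : ℂ) - inner ℂ (J g) w := by
      have h1 : ((T'.res.comp J - J.comp T.res) f) = T'.res (J f) - J (T.res f) := by
        simp [ContinuousLinearMap.sub_apply, ContinuousLinearMap.comp_apply]
      rw [h1, inner_sub_left, T'.res_symm' (J f) w, hures, hgres]
    -- key algebraic identity
    have I1 : (inner ℂ f ((J1' ⟨u, hT'.le hum⟩ : D) : H) : ℂ)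
        = E.form ⟨g, hT.le hgm⟩ (J1' ⟨u, hT'.le hum⟩)
          + inner ℂ g ((J1' ⟨u, hT'.le hum⟩ : D) : H) := by
      calc (inner ℂ f ((J1' ⟨u, hT'.le hum⟩ : D) : H) : ℂ)
          = inner ℂ (T.op ⟨g, hgm⟩ + g) ((J1' ⟨u, hT'.le hum⟩ : D) : H) := by rw [hgf]
        _ = inner ℂ (T.op ⟨g, hgm⟩) ((J1' ⟨u, hT'.le hum⟩ : D) : H)
            + inner ℂ g ((J1' ⟨u, hT'.le hum⟩ : D) : H) := inner_add_left _ _ _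
        _ = E.form ⟨g, hT.le hgm⟩ (J1' ⟨u, hT'.le hum⟩)
            + inner ℂ g ((J1' ⟨u, hT'.le hum⟩ : D) : H) := by
            congr 1
            exact (hT.compat ⟨g, hgm⟩ (J1' ⟨u, hT'.le hum⟩)).symm
    have I2 : (inner ℂ ((J1 ⟨g, hT.le hgm⟩ : D') : H') w : ℂ)
        = E'.form (J1 ⟨g, hT.le hgm⟩) ⟨u, hT'.le hum⟩
          + inner ℂ ((J1 ⟨g, hT.le hgm⟩ : D') : H') u := by
      calc (inner ℂ ((J1 ⟨g, hT.le hgm⟩ : D') : H') w : ℂ)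
          = inner ℂ ((J1 ⟨g, hT.le hgm⟩ : D') : H') (T'.op ⟨u, hum⟩ + u) := by rw [huw]
        _ = inner ℂ ((J1 ⟨g, hT.le hgm⟩ : D') : H') (T'.op ⟨u, hum⟩)
            + inner ℂ ((J1 ⟨g, hT.le hgm⟩ : D') : H') u := inner_add_right _ _ _
        _ = E'.form (J1 ⟨g, hT.le hgm⟩) ⟨u, hT'.le hum⟩
            + inner ℂ ((J1 ⟨g, hT.le hgm⟩ : D') : H') u := by
            congr 1
            have hc := hT'.compat ⟨u, hum⟩ (J1 ⟨g, hT.le hgm⟩)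
            calc (inner ℂ ((J1 ⟨g, hT.le hgm⟩ : D') : H') (T'.op ⟨u, hum⟩) : ℂ)
                = conj (inner ℂ (T'.op ⟨u, hum⟩) ((J1 ⟨g, hT.le hgm⟩ : D') : H') : ℂ) :=
                  (inner_conj_symm _ _).symm
              _ = conj (E'.form ⟨u, hT'.le hum⟩ (J1 ⟨g, hT.le hgm⟩)) :=
                  congrArg conj hc.symm
              _ = E'.form (J1 ⟨g, hT.le hgm⟩) ⟨u, hT'.le hum⟩ :=
                  (E'.conj_symm _ _).symm
    have key : (inner ℂ (J f) u : ℂ) - inner ℂ (J g) w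
        = ((inner ℂ (J (f - g)) u : ℂ) - inner ℂ (f - g) (J' u))
          + inner ℂ (f - g) (J' u - ((J1' ⟨u, hT'.le hum⟩ : D) : H))
          + inner ℂ (((J1 ⟨g, hT.le hgm⟩ : D') : H') - J g) (w - u)
          + (E.form ⟨g, hT.le hgm⟩ (J1' ⟨u, hT'.le hum⟩)
              - E'.form (J1 ⟨g, hT.le hgm⟩) ⟨u, hT'.le hum⟩) := by
      simp only [map_sub, inner_sub_left, inner_sub_right]
      rw [I1, I2]
      ring
    rw [hApp, key]
    -- bounds on the four pieces
    have B1 : ‖(inner ℂ (J (f - g)) u : ℂ) - inner ℂ (f - g) (J' u)‖ ≤ δ * ‖f‖ * ‖w‖ := by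
      have h := ha2 (f - g) u
      exact le_trans h (mul3_le hδ hgsn hun (norm_nonneg _) (norm_nonneg _))
    have B2 : ‖(inner ℂ (f - g) (J' u - ((J1' ⟨u, hT'.le hum⟩ : D) : H)) : ℂ)‖
        ≤ ‖f‖ * (δ * ‖w‖) := by
      have h := norm_inner_le_norm (𝕜 := ℂ) (f - g) (J' u - ((J1' ⟨u, hT'.le hum⟩ : D) : H))
      have h2 : ‖J' u - ((J1' ⟨u, hT'.le hum⟩ : D) : H)‖ ≤ δ * ‖w‖ := by
        rw [norm_sub_rev]
        have h3 : ‖((J1' ⟨u, hT'.le hum⟩ : D) : H) - J' u‖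
            ≤ δ * E'.enorm ⟨u, hT'.le hum⟩ := hc2 ⟨u, hT'.le hum⟩
        exact le_trans h3 (mul_le_mul_of_nonneg_left hue hδ)
      refine le_trans h ?_
      exact mul_le_mul hgsn h2 (norm_nonneg _) (norm_nonneg _)
    have B3 : ‖(inner ℂ (((J1 ⟨g, hT.le hgm⟩ : D') : H') - J g) (w - u) : ℂ)‖
        ≤ (δ * ‖f‖) * ‖w‖ := by
      have h := norm_inner_le_norm (𝕜 := ℂ) (((J1 ⟨g, hT.le hgm⟩ : D') : H') - J g) (w - u)
      have h2 : ‖((J1 ⟨g, hT.le hgm⟩ : D') : H') - J g‖ ≤ δ * ‖f‖ := by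
        have h3 : ‖((J1 ⟨g, hT.le hgm⟩ : D') : H') - J g‖
            ≤ δ * E.enorm ⟨g, hT.le hgm⟩ := hc1 ⟨g, hT.le hgm⟩
        exact le_trans h3 (mul_le_mul_of_nonneg_left hge hδ)
      refine le_trans h ?_
      exact mul_le_mul h2 husn (norm_nonneg _) (by positivity)
    have B4 : ‖(E.form ⟨g, hT.le hgm⟩ (J1' ⟨u, hT'.le hum⟩)
          - E'.form (J1 ⟨g, hT.le hgm⟩) ⟨u, hT'.le hum⟩ : ℂ)‖ ≤ δ * ‖f‖ * ‖w‖ := by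
      have h : ‖(E'.form (J1 ⟨g, hT.le hgm⟩) ⟨u, hT'.le hum⟩
            - E.form ⟨g, hT.le hgm⟩ (J1' ⟨u, hT'.le hum⟩) : ℂ)‖
          ≤ δ * ‖T.op ⟨g, hgm⟩ + g‖ * E'.enorm ⟨u, hT'.le hum⟩ := by
        have h0 := hd' ⟨g, hgm⟩ ⟨u, hT'.le hum⟩
        exact h0
      rw [norm_sub_rev]
      refine le_trans h ?_
      rw [hgf]
      exact mul_le_mul_of_nonneg_left hue (by positivity)
    calc ‖((inner ℂ (J (f - g)) u : ℂ) - inner ℂ (f - g) (J' u))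
          + inner ℂ (f - g) (J' u - ((J1' ⟨u, hT'.le hum⟩ : D) : H))
          + inner ℂ (((J1 ⟨g, hT.le hgm⟩ : D') : H') - J g) (w - u)
          + (E.form ⟨g, hT.le hgm⟩ (J1' ⟨u, hT'.le hum⟩)
              - E'.form (J1 ⟨g, hT.le hgm⟩) ⟨u, hT'.le hum⟩)‖
        ≤ ‖((inner ℂ (J (f - g)) u : ℂ) - inner ℂ (f - g) (J' u))
          + inner ℂ (f - g) (J' u - ((J1' ⟨u, hT'.le hum⟩ : D) : H))
          + inner ℂ (((J1 ⟨g, hT.le hgm⟩ : D') : H') - J g) (w - u)‖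
          + ‖(E.form ⟨g, hT.le hgm⟩ (J1' ⟨u, hT'.le hum⟩)
              - E'.form (J1 ⟨g, hT.le hgm⟩) ⟨u, hT'.le hum⟩ : ℂ)‖ := norm_add_le _ _
      _ ≤ (‖((inner ℂ (J (f - g)) u : ℂ) - inner ℂ (f - g) (J' u))
          + inner ℂ (f - g) (J' u - ((J1' ⟨u, hT'.le hum⟩ : D) : H))‖
          + ‖(inner ℂ (((J1 ⟨g, hT.le hgm⟩ : D') : H') - J g) (w - u) : ℂ)‖)
          + ‖(E.form ⟨g, hT.le hgm⟩ (J1' ⟨u, hT'.le hum⟩)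
              - E'.form (J1 ⟨g, hT.le hgm⟩) ⟨u, hT'.le hum⟩ : ℂ)‖ :=
          add_le_add_left (norm_add_le _ _) _
      _ ≤ ((‖(inner ℂ (J (f - g)) u : ℂ) - inner ℂ (f - g) (J' u)‖
          + ‖(inner ℂ (f - g) (J' u - ((J1' ⟨u, hT'.le hum⟩ : D) : H)) : ℂ)‖)
          + ‖(inner ℂ (((J1 ⟨g, hT.le hgm⟩ : D') : H') - J g) (w - u) : ℂ)‖)
          + ‖(E.form ⟨g, hT.le hgm⟩ (J1' ⟨u, hT'.le hum⟩)
              - E'.form (J1 ⟨g, hT.le hgm⟩) ⟨u, hT'.le hum⟩ : ℂ)‖ :=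
          add_le_add_left (add_le_add_left (norm_add_le _ _) _) _
      _ ≤ ((δ * ‖f‖ * ‖w‖ + ‖f‖ * (δ * ‖w‖)) + (δ * ‖f‖) * ‖w‖) + δ * ‖f‖ * ‖w‖ := by
          exact add_le_add (add_le_add (add_le_add B1 B2) B3) B4
      _ = 4 * δ * ‖f‖ * ‖w‖ := by ring
  refine ⟨hinter, ?_⟩
  constructor
  · -- norm_J
    apply ContinuousLinearMap.opNorm_le_bound _ (by linarith)
    intro f
    calc ‖J f‖ ≤ (1 + δ) * ‖f‖ := ha1 f
      _ ≤ (1 + 4 * δ) * ‖f‖ := by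
          apply mul_le_mul_of_nonneg_right _ (norm_nonneg f); linarith
  · -- adjoint_close
    apply ContinuousLinearMap.opNorm_le_bound _ h4δ
    intro u
    have hv : ∀ x : H, ‖(inner ℂ ((ContinuousLinearMap.adjoint J - J') u) x : ℂ)‖
        ≤ (δ * ‖u‖) * ‖x‖ := by
      intro x
      have h1 : (inner ℂ ((ContinuousLinearMap.adjoint J - J') u) x : ℂ)
          = inner ℂ u (J x) - inner ℂ (J' u) x := by
        rw [ContinuousLinearMap.sub_apply, inner_sub_left,
          ContinuousLinearMap.adjoint_inner_left]
      rw [h1]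
      have h2 := ha2 x u
      have h3 : (inner ℂ u (J x) : ℂ) - inner ℂ (J' u) x
          = conj ((inner ℂ (J x) u : ℂ) - inner ℂ x (J' u)) := by
        rw [map_sub, inner_conj_symm, inner_conj_symm]
      rw [h3, RCLike.norm_conj]
      calc ‖(inner ℂ (J x) u : ℂ) - inner ℂ x (J' u)‖ ≤ δ * ‖x‖ * ‖u‖ := h2
        _ = (δ * ‖u‖) * ‖x‖ := by ring
    calc ‖(ContinuousLinearMap.adjoint J - J') u‖ ≤ δ * ‖u‖ :=
          norm_le_of_inner (by positivity) hv
      _ ≤ 4 * δ * ‖u‖ := by nlinarith [norm_nonneg u]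
  · -- inv_left
    apply ContinuousLinearMap.opNorm_le_bound _ h4δ
    intro f
    obtain ⟨g, hgm, hgres, hgf, hgn, hgsn, hge⟩ := res_package E T hT f
    have h1 : ((ContinuousLinearMap.id ℂ H - J'.comp J).comp T.res) f
        = g - J' (J g) := by
      simp [ContinuousLinearMap.sub_apply, ContinuousLinearMap.comp_apply, hgres]
    rw [h1]
    have h2 : ‖g - J' (J g)‖ ≤ δ * E.enorm ⟨g, hT.le hgm⟩ := hb1 ⟨g, hT.le hgm⟩
    calc ‖g - J' (J g)‖ ≤ δ * E.enorm ⟨g, hT.le hgm⟩ := h2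
      _ ≤ δ * ‖f‖ := mul_le_mul_of_nonneg_left hge hδ
      _ ≤ 4 * δ * ‖f‖ := by nlinarith [norm_nonneg f]
  · -- inv_right
    apply ContinuousLinearMap.opNorm_le_bound _ h4δ
    intro w
    obtain ⟨u, hum, hures, huw, hun, husn, hue⟩ := res_package E' T' hT' w
    have h1 : ((ContinuousLinearMap.id ℂ H' - J.comp J').comp T'.res) w
        = u - J (J' u) := by
      simp [ContinuousLinearMap.sub_apply, ContinuousLinearMap.comp_apply, hures]
    rw [h1]
    have h2 : ‖u - J (J' u)‖ ≤ δ * E'.enorm ⟨u, hT'.le hum⟩ := hb2 ⟨u, hT'.le hum⟩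
    calc ‖u - J (J' u)‖ ≤ δ * E'.enorm ⟨u, hT'.le hum⟩ := h2
      _ ≤ δ * ‖w‖ := mul_le_mul_of_nonneg_left hue hδ
      _ ≤ 4 * δ * ‖w‖ := by nlinarith [norm_nonneg w]
  · -- intertwine
    exact hinter

end
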